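/- In the transition system R3, for all integers n, c with n ≥ 0, the term sum n c reduces to ret ((n*(n+1))/2) (c + n + 1); that is, Relation.ReflTransGen step3 (sum n c) (ret ((n*(n+1))/2) (c+n+1)) holds. In words: the recursive function sum called on n with global counter num initially c returns 0+1+...+n, and num ends at c+n+1. -/

import Mathlib

inductive Term3 : Type
  | sum : ℤ → ℤ → Term3
  | u1 : ℤ → ℤ → ℤ → Term3
  | u2 : ℤ → ℤ → ℤ → Term3
  | u3 : ℤ → ℤ → ℤ → Term3
  | u4 : ℤ → ℤ → ℤ → Term3
  | u5 : ℤ → ℤ → ℤ → Term3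
  | u7 : ℤ → ℤ → ℤ → Term3
  | u8 : ℤ → ℤ → ℤ → Term3
  | u9 : ℤ → ℤ → ℤ → Term3
  | u6 : ℤ → ℤ → ℤ → Term3 → Term3
  | ret : ℤ → ℤ → Term3
  | main : ℤ → Term3
  | u10 : ℤ → ℤ → Term3
  | u11 : ℤ → ℤ → Term3 → Term3
  | u12 : ℤ → ℤ → Term3

open Term3

inductive step3 : Term3 → Term3 → Prop
  | sum_init (x num : ℤ) : step3 (sum x num) (u1 x num 0)
  | u1_step (x num z : ℤ) : step3 (u1 x num z) (u2 x (num+1) z)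
  | u2_then (x num z : ℤ) : x ≤ 0 → step3 (u2 x num z) (u3 x num z)
  | u2_else (x num z : ℤ) : ¬ x ≤ 0 → step3 (u2 x num z) (u5 x num z)
  | u3_step (x num z : ℤ) : step3 (u3 x num z) (u4 x num 0)
  | u4_step (x num z : ℤ) : step3 (u4 x num z) (u9 x num z)
  | u5_step (x num z : ℤ) : step3 (u5 x num z) (u6 x num z (sum (x-1) num))
  | u6_ret (x numOld z y numNew : ℤ) : step3 (u6 x numOld z (ret y numNew)) (u7 x numNew y)
  | u7_step (x num z : ℤ) : step3 (u7 x num z) (u8 x num (x+z))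
  | u8_step (x num z : ℤ) : step3 (u8 x num z) (u9 x num z)
  | u9_step (x num z : ℤ) : step3 (u9 x num z) (ret z num)
  | main_step (num : ℤ) : step3 (main num) (u10 num 3)
  | u10_step (num z : ℤ) : step3 (u10 num z) (u11 num z (sum z num))
  | u11_ret (numOld z y numNew : ℤ) : step3 (u11 numOld z (ret y numNew)) (u12 y numNew)
  | u12_step (z num : ℤ) : step3 (u12 z num) (ret 0 num)
  | u6_cong (x num z : ℤ) {t t' : Term3} : step3 t t' → step3 (u6 x num z t) (u6 x num z t')
  | u11_cong (num z : ℤ) {t t' : Term3} : step3 t t' → step3 (u11 num z t) (u11 num z t')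


lemma aux9 (m : ℕ) : ∀ c : ℤ, Relation.ReflTransGen step3 (sum (m:ℤ) c)
    (ret (((m:ℤ)*((m:ℤ)+1))/2) (c+(m:ℤ)+1)) := by
  induction m with
  | zero =>
    intro c
    have h1 : step3 (sum 0 c) (u1 0 c 0) := step3.sum_init 0 c
    have h2 : step3 (u1 0 c 0) (u2 0 (c+1) 0) := step3.u1_step 0 c 0
    have h3 : step3 (u2 0 (c+1) 0) (u3 0 (c+1) 0) := step3.u2_then 0 (c+1) 0 le_rfl
    have h4 : step3 (u3 0 (c+1) 0) (u4 0 (c+1) 0) := step3.u3_step 0 (c+1) 0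
    have h5 : step3 (u4 0 (c+1) 0) (u9 0 (c+1) 0) := step3.u4_step 0 (c+1) 0
    have h6 : step3 (u9 0 (c+1) 0) (ret 0 (c+1)) := step3.u9_step 0 (c+1) 0
    simp only [Nat.cast_zero]
    rw [show ((0:ℤ)*(0+1))/2 = 0 by norm_num, show (c + 0 + 1 : ℤ) = c + 1 by ring]
    exact .head h1 (.head h2 (.head h3 (.head h4 (.head h5 (.single h6)))))
  | succ m ih =>
    intro c
    set n : ℤ := (m : ℤ) with hndef
    have hcast : ((m+1 : ℕ) : ℤ) = n + 1 := by push_cast; ring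
    rw [hcast]
    have hne : ¬ (n + 1 : ℤ) ≤ 0 := by have : (0:ℤ) ≤ n := Int.natCast_nonneg m; omega
    have h1 := step3.sum_init (n+1) c
    have h2 := step3.u1_step (n+1) c 0
    have h3 := step3.u2_else (n+1) (c+1) 0 hne
    have h4 := step3.u5_step (n+1) (c+1) 0
    have hrec : Relation.ReflTransGen step3 (u6 (n+1) (c+1) 0 (sum (n+1-1) (c+1)))
        (u6 (n+1) (c+1) 0 (ret ((n*(n+1))/2) (c+1+n+1))) := by
      rw [show (n+1-1 : ℤ) = n by ring]
      exact Relation.ReflTransGen.lift (u6 (n+1) (c+1) 0)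
        (fun _ _ h => step3.u6_cong (n+1) (c+1) 0 h) _ _ (ih (c+1))
    have h5 := step3.u6_ret (n+1) (c+1) 0 ((n*(n+1))/2) (c+1+n+1)
    have h6 := step3.u7_step (n+1) (c+1+n+1) ((n*(n+1))/2)
    have h7 := step3.u8_step (n+1) (c+1+n+1) ((n+1) + (n*(n+1))/2)
    have h8 := step3.u9_step (n+1) (c+1+n+1) ((n+1) + (n*(n+1))/2)
    have hval : (n+1) + (n*(n+1))/2 = ((n+1)*((n+1)+1))/2 := by
      obtain ⟨k, hk⟩ := Int.even_mul_succ_self n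
      rw [show (n+1)*((n+1)+1) = n*(n+1) + 2*(n+1) by ring, hk]
      omega
    have hcnt : (c + 1 + n + 1 : ℤ) = c + (n+1) + 1 := by ring
    rw [← hval, ← hcnt]
    exact .head h1 (.head h2 (.head h3 ((Relation.ReflTransGen.head h4 hrec).trans
      (.head h5 (.head h6 (.head h7 (.single h8)))))))

theorem stmt_9 (n c : ℤ) (hn : n ≥ 0) :
    Relation.ReflTransGen step3 (sum n c) (ret ((n*(n+1))/2) (c+n+1)) := by
  have h := aux9 n.toNat c
  rwa [Int.toNat_of_nonneg hn] at h
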